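/- If a sequence (M_p) of positive reals with M_0 = 1 satisfies logarithmic convexity and the stability condition, then for every rational m = r/s > 0 there exists B ≥ 0 such that for all p ∈ ℕ with pm ∈ ℕ, one has M_{pm} ≤ B^p (M_p)^m. -/

import Mathlib

/-- If `(M p)` is a sequence of positive reals with `M 0 = 1` satisfying logarithmic
convexity and the stability condition, then for every positive rational `m` there exists
`B ≥ 0` such that for all `p` with `p * m ∈ ℕ` one has `M (p*m) ≤ B^p * (M p)^m`. -/
theorem stability_rational_power_bound (M : ℕ → ℝ) (hpos : ∀ p, 0 < M p) (h0 : M 0 = 1)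
    (hlc : ∀ p : ℕ, 1 ≤ p → (M p) ^ 2 ≤ M (p - 1) * M (p + 1))
    (hstab : ∃ H > (0 : ℝ), ∀ p j : ℕ, j ≤ p →
      (p.choose j : ℝ) * (M (p - j) * M j) ≤ M p ∧ M p ≤ H ^ p * (M (p - j) * M j))
    (m : ℚ) (hm : 0 < m) :
    ∃ B : ℝ, 0 ≤ B ∧ ∀ p q : ℕ, (q : ℚ) = (p : ℚ) * m →
      M q ≤ B ^ p * (M p) ^ (m : ℝ) := by
  obtain ⟨H, hH, hst⟩ := hstab
  set r : ℕ → ℝ := fun i => M (i + 1) / M i with hrdef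
  have hrpos : ∀ i, 0 < r i := fun i => div_pos (hpos _) (hpos _)
  have hrmono : Monotone r := by
    apply monotone_nat_of_le_succ
    intro i
    have hl := hlc (i + 1) (by omega)
    simp only [Nat.add_sub_cancel] at hl
    show M (i + 1) / M i ≤ M (i + 2) / M (i + 1)
    rw [div_le_div_iff₀ (hpos _) (hpos _)]
    nlinarith [hpos i, hpos (i + 1), hpos (i + 2)]
  have hMr : ∀ q, M q ≤ r q ^ q := by
    intro q
    induction q with
    | zero => simp [h0]
    | succ n ih =>
      have h1 : M (n + 1) = M n * r n := by
        show M (n+1) = M n * (M (n+1) / M n)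
        rw [mul_comm, div_mul_eq_mul_div, mul_div_assoc, div_self (hpos n).ne', mul_one]
      calc M (n + 1) = M n * r n := h1
        _ ≤ r n ^ n * r n := by nlinarith [hpos n, hrpos n, pow_nonneg (hrpos n).le n]
        _ = r n ^ (n + 1) := by ring
        _ ≤ r (n + 1) ^ (n + 1) := pow_le_pow_left₀ (hrpos n).le (hrmono (by omega)) _
  have hGM : ∀ d q : ℕ, M q ^ (q + d) ≤ M (q + d) ^ q := by
    intro d
    induction d with
    | zero => intro q; simp
    | succ n ih =>
      intro q
      have h1 : M (q + n + 1) = M (q + n) * r (q + n) := by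
        show M (q+n+1) = M (q+n) * (M (q+n+1) / M (q+n))
        rw [mul_comm, div_mul_eq_mul_div, mul_div_assoc, div_self (hpos (q+n)).ne', mul_one]
      have hq1 : M q ≤ r (q + n) ^ q :=
        le_trans (hMr q) (pow_le_pow_left₀ (hrpos q).le (hrmono (by omega)) _)
      calc M q ^ (q + (n + 1)) = M q ^ (q + n) * M q := by ring
        _ ≤ M (q + n) ^ q * r (q + n) ^ q :=
            mul_le_mul (ih q) hq1 (hpos q).le (pow_nonneg (hpos _).le _)
        _ = (M (q + n) * r (q + n)) ^ q := (mul_pow _ _ _).symm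
        _ = M (q + (n + 1)) ^ q := by rw [← h1]; exact congrArg (· ^ q) (congrArg M (by omega))
  set H' : ℝ := max H 1 with hH'def
  have hH'1 : (1:ℝ) ≤ H' := le_max_right _ _
  have hH'0 : (0:ℝ) < H' := by linarith
  have hC : ∀ k p : ℕ, M (k * p) ≤ (H' ^ (k * k)) ^ p * M p ^ k := by
    intro k
    induction k with
    | zero => intro p; simp [h0]
    | succ n ih =>
      intro p
      have hs := (hst (n * p + p) p (by omega)).2
      rw [Nat.add_sub_cancel] at hs
      have hHle : H ^ (n * p + p) ≤ H' ^ (n * p + p) :=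
        pow_le_pow_left₀ hH.le (le_max_left _ _) _
      have hmm : (0:ℝ) ≤ M (n * p) * M p := mul_nonneg (hpos _).le (hpos _).le
      calc M ((n + 1) * p) = M (n * p + p) := by rw [show (n+1)*p = n*p+p by ring]
        _ ≤ H ^ (n * p + p) * (M (n * p) * M p) := hs
        _ ≤ H' ^ (n * p + p) * (M (n * p) * M p) := mul_le_mul_of_nonneg_right hHle hmm
        _ ≤ H' ^ (n * p + p) * ((H' ^ (n * n)) ^ p * M p ^ n * M p) := by
            apply mul_le_mul_of_nonneg_left _ (pow_nonneg hH'0.le _)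
            calc M (n * p) * M p ≤ ((H' ^ (n * n)) ^ p * M p ^ n) * M p :=
                  mul_le_mul_of_nonneg_right (ih p) (hpos p).le
              _ = (H' ^ (n * n)) ^ p * M p ^ n * M p := rfl
        _ = H' ^ (n * p + p + n * n * p) * M p ^ (n + 1) := by
            rw [← pow_mul]; ring
        _ ≤ H' ^ ((n + 1) * (n + 1) * p) * M p ^ (n + 1) := by
            apply mul_le_mul_of_nonneg_right _ (pow_nonneg (hpos p).le _)
            exact pow_le_pow_right₀ hH'1 (by nlinarith)
        _ = (H' ^ ((n + 1) * (n + 1))) ^ p * M p ^ (n + 1) := by rw [← pow_mul]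
  set k : ℕ := (⌈m⌉).toNat with hkdef
  have hceil : (0:ℤ) < ⌈m⌉ := Int.ceil_pos.mpr hm
  have hk1 : 1 ≤ k := by rw [hkdef]; omega
  have hmk : m ≤ (k : ℚ) := by
    have h1 : m ≤ (⌈m⌉ : ℚ) := Int.le_ceil m
    have h2 : ((k : ℤ) : ℚ) = (⌈m⌉ : ℚ) := by
      rw [hkdef]; exact_mod_cast congrArg (Int.cast : ℤ → ℚ) (Int.toNat_of_nonneg hceil.le)
    push_cast at h2 ⊢
    linarith
  refine ⟨H' ^ (k * k), pow_nonneg hH'0.le _, ?_⟩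
  intro p q hq
  by_cases hp : p = 0
  · subst hp
    have hq0 : q = 0 := by
      have : (q : ℚ) = 0 := by simpa using hq
      exact_mod_cast this
    subst hq0
    simp [h0]
  · have hp0 : 0 < p := Nat.pos_of_ne_zero hp
    have hqkp : q ≤ k * p := by
      have h1 : (q : ℚ) ≤ (k : ℚ) * p := by
        rw [hq]
        have hp' : (0:ℚ) ≤ (p:ℚ) := by positivity
        nlinarith
      exact_mod_cast h1
    set n : ℕ := k * p with hndef
    have hn0 : 0 < n := Nat.mul_pos hk1 hp0
    have hGM' := hGM (n - q) q
    rw [Nat.add_sub_cancel' hqkp] at hGM'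
    -- logs
    have hqR : (q : ℝ) = (p : ℝ) * (m : ℝ) := by exact_mod_cast congrArg (Rat.cast : ℚ → ℝ) hq
    have hlog1 : (n : ℝ) * Real.log (M q) ≤ (q : ℝ) * Real.log (M n) := by
      have := Real.log_le_log (pow_pos (hpos q) n) hGM'
      rwa [Real.log_pow, Real.log_pow] at this
    have hlog2 : Real.log (M n) ≤ (k:ℝ) * k * p * Real.log H' + (k : ℝ) * Real.log (M p) := by
      have h3 := Real.log_le_log (hpos n) (hC k p)
      rw [Real.log_mul (pow_ne_zero _ (pow_ne_zero _ hH'0.ne')) (pow_ne_zero _ (hpos p).ne'),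
        Real.log_pow, Real.log_pow, Real.log_pow] at h3
      push_cast at h3
      linarith
    have hlogH : 0 ≤ Real.log H' := Real.log_nonneg hH'1
    have hkey : Real.log (M q) ≤ (k * k * p : ℝ) * Real.log H' + (m : ℝ) * Real.log (M p) := by
      have hnR : (0:ℝ) < (n : ℝ) := by exact_mod_cast hn0
      have hpR : (0:ℝ) < (p : ℝ) := by exact_mod_cast hp0
      have hkR : (0:ℝ) < (k : ℝ) := by exact_mod_cast hk1
      have hnkp : (n : ℝ) = (k : ℝ) * p := by exact_mod_cast congrArg (Nat.cast : ℕ → ℝ) hndef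
      have h4 : Real.log (M q) ≤ ((q : ℝ) / n) * Real.log (M n) := by
        rw [div_mul_eq_mul_div, le_div_iff₀ hnR]
        linarith [hlog1]
      have h5 : ((q : ℝ) / n) * Real.log (M n) ≤
          ((q : ℝ) / n) * ((k:ℝ) * k * p * Real.log H' + (k : ℝ) * Real.log (M p)) :=
        mul_le_mul_of_nonneg_left hlog2 (by positivity)
      have hqkpR : (q : ℝ) ≤ (k : ℝ) * p := by exact_mod_cast hqkp
      have e1 : ((q : ℝ) / n) * ((k : ℝ) * Real.log (M p)) = (m : ℝ) * Real.log (M p) := by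
        rw [hnkp]
        field_simp
        rw [hqR]; ring
      have e2 : ((q : ℝ) / n) * ((k:ℝ) * k * p * Real.log H') ≤
          (k * k * p : ℝ) * Real.log H' := by
        rw [hnkp]
        have h7 : (q : ℝ) / ((k:ℝ) * p) * ((k:ℝ) * k * p * Real.log H')
            = (k:ℝ) * q * Real.log H' := by
          field_simp
        rw [h7]
        have h8 : (k:ℝ) * q ≤ (k:ℝ) * ((k:ℝ) * p) := by nlinarith
        nlinarith
      calc Real.log (M q)
          ≤ ((q:ℝ)/n) * ((k:ℝ) * k * p * Real.log H' + (k:ℝ) * Real.log (M p)) :=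
            le_trans h4 h5
        _ = ((q:ℝ)/n) * ((k:ℝ) * k * p * Real.log H')
            + ((q:ℝ)/n) * ((k:ℝ) * Real.log (M p)) := by ring
        _ ≤ (k * k * p : ℝ) * Real.log H' + (m:ℝ) * Real.log (M p) := by
            rw [e1]; exact add_le_add_left e2 _
    -- exponentiate
    have hfin : M q ≤ H' ^ (k * k * p) * M p ^ (m : ℝ) := by
      have h6 : Real.exp (Real.log (M q)) ≤
          Real.exp ((k * k * p : ℝ) * Real.log H' + (m : ℝ) * Real.log (M p)) :=
        Real.exp_le_exp.mpr hkey
      rw [Real.exp_log (hpos q), Real.exp_add] at h6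
      have e3 : Real.exp ((k * k * p : ℝ) * Real.log H') = H' ^ (k * k * p) := by
        rw [← Real.rpow_natCast H' (k*k*p), Real.rpow_def_of_pos hH'0]
        push_cast
        ring_nf
      have e4 : Real.exp ((m : ℝ) * Real.log (M p)) = M p ^ (m : ℝ) := by
        rw [Real.rpow_def_of_pos (hpos p)]
        ring_nf
      rw [e3, e4] at h6
      exact h6
    calc M q ≤ H' ^ (k * k * p) * M p ^ (m : ℝ) := hfin
      _ = (H' ^ (k * k)) ^ p * M p ^ (m : ℝ) := by rw [← pow_mul]
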